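/- With Q, Ψ₁, Ψ₀, a, θ as above (QΨ₁ = (1−2a)Ψ₁ − 2aΨ₀, QΨ₀ = 2(1−a)Ψ₁ + (1−2a)Ψ₀, sin²θ = a, 0<a<1), for every nonnegative integer j: Q^j(Ψ₁+Ψ₀) = (sin((2j+1)θ)/√a)·Ψ₁ + (cos((2j+1)θ)/√(1−a))·Ψ₀. -/

import Mathlib

theorem grover_iterate_power {H : Type*} [NormedAddCommGroup H] [InnerProductSpace ℂ H]
    (Q : H →ₗ[ℂ] H) (Ψ₁ Ψ₀ : H) (a θ : ℝ)
    (ha0 : 0 < a) (ha1 : a < 1)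
    (hθ0 : 0 < θ) (hθ1 : θ < Real.pi / 2) (hsin : Real.sin θ ^ 2 = a)
    (hnorm1 : @inner ℂ H _ Ψ₁ Ψ₁ = (a : ℂ))
    (hnorm0 : @inner ℂ H _ Ψ₀ Ψ₀ = ((1 - a : ℝ) : ℂ))
    (horth : @inner ℂ H _ Ψ₁ Ψ₀ = 0)
    (hQ1 : Q Ψ₁ = ((1 - 2 * a : ℝ) : ℂ) • Ψ₁ - ((2 * a : ℝ) : ℂ) • Ψ₀)
    (hQ0 : Q Ψ₀ = ((2 * (1 - a) : ℝ) : ℂ) • Ψ₁ + ((1 - 2 * a : ℝ) : ℂ) • Ψ₀)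
    (j : ℕ) :
    (Q ^ j) (Ψ₁ + Ψ₀) =
      ((Real.sin ((2 * j + 1) * θ) / Real.sqrt a : ℝ) : ℂ) • Ψ₁ +
        ((Real.cos ((2 * j + 1) * θ) / Real.sqrt (1 - a) : ℝ) : ℂ) • Ψ₀ := by
  have hsinθ : Real.sin θ = Real.sqrt a := by
    rw [← hsin]
    exact (Real.sqrt_sq (Real.sin_nonneg_of_nonneg_of_le_pi hθ0.le
      (hθ1.le.trans (by linarith [Real.pi_pos])))).symm
  have hcos2 : Real.cos θ ^ 2 = 1 - a := by
    have := Real.sin_sq_add_cos_sq θ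
    linarith
  have hcosθ : Real.cos θ = Real.sqrt (1 - a) := by
    rw [← hcos2]
    exact (Real.sqrt_sq (Real.cos_nonneg_of_mem_Icc
      ⟨by linarith [Real.pi_pos], hθ1.le⟩)).symm
  have hsa : Real.sqrt a ≠ 0 := by positivity
  have hsb : Real.sqrt (1 - a) ≠ 0 := by
    have : (0:ℝ) < 1 - a := by linarith
    positivity
  have hsa2 : Real.sqrt a ^ 2 = a := Real.sq_sqrt ha0.le
  have hsb2 : Real.sqrt (1 - a) ^ 2 = 1 - a := Real.sq_sqrt (by linarith)
  induction j with
  | zero =>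
      simp only [pow_zero, Module.End.one_apply, Nat.cast_zero]
      rw [show (2 * (0:ℝ) + 1) * θ = θ by ring, hsinθ, hcosθ,
        div_self hsa, div_self hsb]
      simp
  | succ n ih =>
      rw [pow_succ', Module.End.mul_apply, ih, map_add, map_smul, map_smul, hQ1, hQ0]
      have hs : Real.sin ((2 * ((n+1:ℕ):ℝ) + 1) * θ) / Real.sqrt a =
          Real.sin ((2 * (n:ℕ) + 1) * θ) / Real.sqrt a * (1 - 2*a) +
          Real.cos ((2 * (n:ℕ) + 1) * θ) / Real.sqrt (1 - a) * (2 * (1 - a)) := by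
        have key : ((2 * (((n:ℕ):ℝ)+1) + 1) * θ) = (2 * ((n:ℕ):ℝ) + 1) * θ + 2 * θ := by ring
        push_cast
        rw [key, Real.sin_add, Real.cos_two_mul, Real.sin_two_mul, hsinθ, hcosθ, hsb2]
        generalize (2 * ((n:ℕ):ℝ) + 1) * θ = x
        field_simp
        ring_nf
        linear_combination (2*Real.cos x*Real.sqrt a)*hsb2
      have hc : Real.cos ((2 * ((n+1:ℕ):ℝ) + 1) * θ) / Real.sqrt (1 - a) =
          Real.sin ((2 * (n:ℕ) + 1) * θ) / Real.sqrt a * (-(2*a)) +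
          Real.cos ((2 * (n:ℕ) + 1) * θ) / Real.sqrt (1 - a) * (1 - 2*a) := by
        have key : ((2 * (((n:ℕ):ℝ)+1) + 1) * θ) = (2 * ((n:ℕ):ℝ) + 1) * θ + 2 * θ := by ring
        push_cast
        rw [key, Real.cos_add, Real.cos_two_mul, Real.sin_two_mul, hsinθ, hcosθ, hsb2]
        generalize (2 * ((n:ℕ):ℝ) + 1) * θ = x
        field_simp
        ring_nf
        linear_combination (-(2*Real.sin x*Real.sqrt (1-a))) * hsa2
      have hs' : ((Real.sin ((2 * ((n+1:ℕ):ℝ) + 1) * θ) / Real.sqrt a : ℝ) : ℂ) =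
          ((Real.sin ((2 * (n:ℕ) + 1) * θ) / Real.sqrt a * (1 - 2*a) +
            Real.cos ((2 * (n:ℕ) + 1) * θ) / Real.sqrt (1 - a) * (2 * (1 - a)) : ℝ) : ℂ) :=
        Complex.ofReal_inj.mpr hs
      have hc' : ((Real.cos ((2 * ((n+1:ℕ):ℝ) + 1) * θ) / Real.sqrt (1 - a) : ℝ) : ℂ) =
          ((Real.sin ((2 * (n:ℕ) + 1) * θ) / Real.sqrt a * (-(2*a)) +
            Real.cos ((2 * (n:ℕ) + 1) * θ) / Real.sqrt (1 - a) * (1 - 2*a) : ℝ) : ℂ) :=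
        Complex.ofReal_inj.mpr hc
      rw [hs', hc']
      push_cast
      module
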